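/- arXiv:1312.6447 — 8 statements merged into one kernel-verified Lean document; each statement's English description precedes it below -/
import Mathlib

section
/- Let r ≥ 1 be an integer, let T, F, z* be real numbers, and let λ_0 ≤ λ_1 ≤ ⋯ ≤ λ_{r−1} be nonnegative real numbers such that r·(λ_0 + λ_1 + ⋯ + λ_{r−1}) ≤ T·F and z* ≤ T·F − r(r−1)/2 − (λ_0 + λ_1 + ⋯ + λ_{r−1}). Then z* ≤ 2·(T·F − Σ_{i=0}^{r−1} λ_i·(r−i)) − r(r−1)/2. -/
/-- arithmetic content of the 2-approximation theorem for
`Quickest-to-ultimate` on unit-capacity instances. -/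
theorem quickest_to_ultimate_two_approx
    (r : ℕ) (hr : 1 ≤ r) (T F zstar : ℝ) (lam : ℕ → ℝ)
    (hmono : ∀ i, i + 1 < r → lam i ≤ lam (i + 1))
    (hnonneg : ∀ i, i < r → 0 ≤ lam i)
    (hsum : (r : ℝ) * (∑ i ∈ Finset.range r, lam i) ≤ T * F)
    (hopt : zstar ≤ T * F - (r : ℝ) * ((r : ℝ) - 1) / 2 - ∑ i ∈ Finset.range r, lam i) :
    zstar ≤ 2 * (T * F - ∑ i ∈ Finset.range r, lam i * ((r : ℝ) - (i : ℝ)))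
      - (r : ℝ) * ((r : ℝ) - 1) / 2 := by
  have hmono' : ∀ i j, i ≤ j → j < r → lam i ≤ lam j := by
    intro i j hij hjr
    induction j with
    | zero => simp_all
    | succ k ih =>
      rcases Nat.lt_or_ge i (k + 1) with h | h
      · exact le_trans (ih (Nat.lt_succ_iff.mp h) (Nat.lt_of_succ_lt hjr)) (hmono k hjr)
      · have : i = k + 1 := le_antisymm hij h
        simp [this]
  set c : ℕ → ℝ := fun i => lam i * ((r : ℝ) - 1 - 2 * (i : ℝ)) with hc
  have key : ∑ i ∈ Finset.range r, c i ≤ 0 := by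
    have hrefl : ∑ i ∈ Finset.range r, c (r - 1 - i) = ∑ i ∈ Finset.range r, c i :=
      Finset.sum_range_reflect c r
    have hpair : ∑ i ∈ Finset.range r, (c i + c (r - 1 - i)) ≤ 0 := by
      apply Finset.sum_nonpos
      intro i hi
      have hi' : i < r := Finset.mem_range.mp hi
      have hj : r - 1 - i < r := by omega
      have hcast : ((r - 1 - i : ℕ) : ℝ) = (r : ℝ) - 1 - (i : ℝ) := by
        have h1 : 1 + i ≤ r := by omega
        push_cast [Nat.sub_sub, Nat.cast_sub h1]
        ring
      have hA : c i + c (r - 1 - i) = (lam i - lam (r - 1 - i)) * ((r : ℝ) - 1 - 2 * i) := by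
        simp only [hc, hcast]; ring
      rw [hA]
      rcases le_or_gt i (r - 1 - i) with hle | hlt
      · apply mul_nonpos_of_nonpos_of_nonneg
        · linarith [hmono' i (r - 1 - i) hle hj]
        · have : 2 * i + 1 ≤ r := by omega
          have : ((2 * i + 1 : ℕ) : ℝ) ≤ (r : ℝ) := by exact_mod_cast this
          push_cast at this; linarith
      · apply mul_nonpos_of_nonneg_of_nonpos
        · linarith [hmono' (r - 1 - i) i hlt.le hi']
        · have : r ≤ 2 * i + 1 := by omega
          have : ((r : ℕ) : ℝ) ≤ ((2 * i + 1 : ℕ) : ℝ) := by exact_mod_cast this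
          push_cast at this; linarith
    rw [Finset.sum_add_distrib, hrefl] at hpair
    linarith
  have expand : ∑ i ∈ Finset.range r, c i
      = 2 * (∑ i ∈ Finset.range r, lam i * ((r : ℝ) - (i : ℝ)))
        - ((r : ℝ) + 1) * ∑ i ∈ Finset.range r, lam i := by
    rw [Finset.mul_sum, Finset.mul_sum, ← Finset.sum_sub_distrib]
    exact Finset.sum_congr rfl fun i _ => by simp only [hc]; ring
  have hS : 0 ≤ ∑ i ∈ Finset.range r, lam i :=
    Finset.sum_nonneg fun i hi => hnonneg i (Finset.mem_range.mp hi)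
  rw [expand] at key
  linarith
end

section
/- Let r ≥ 2 be an integer, let T and F be real numbers with F ≥ r, and let (μ, c, T) be a triple lying in X(r). Then T·F − Σ_{j=1}^{r} c_j ≤ (3/2)·(T·F − Σ_{i=0}^{r−1} (r−i)·μ_i). -/
/-- `(μ, c, T)` lies in the polyhedron `X(r)` from the paper. -/
def memX (r : ℕ) (μ c : ℕ → ℝ) (T : ℝ) : Prop :=
  (∀ i, i + 1 < r → μ i ≤ μ (i + 1)) ∧
  (∀ i j, i < j → j ≤ r → ((j : ℝ) - (i : ℝ)) * μ i ≤ c j) ∧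
  (∑ i ∈ Finset.range r, μ i) ≤ T ∧
  c 0 = 0 ∧
  (∀ i, i < r → 0 ≤ μ i) ∧
  (∀ j, 1 ≤ j → j ≤ r → 0 ≤ c j)


lemma abel_aux (R : ℕ) (w μ : ℕ → ℝ) (hmono : ∀ i, i + 1 < R → μ i ≤ μ (i + 1))
    (hW : ∀ k, k ≤ R → 0 ≤ ∑ i ∈ Finset.Ico k R, w i) :
    ∀ n k, k + n = R →
      (∑ i ∈ Finset.Ico k R, w i) * μ k ≤ ∑ i ∈ Finset.Ico k R, w i * μ i := by
  intro n
  induction n with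
  | zero => intro k hk; simp [show R ≤ k by omega, Finset.Ico_eq_empty_of_le]
  | succ n ih =>
    intro k hk
    have hkR : k < R := by omega
    rw [Finset.sum_eq_sum_Ico_succ_bot hkR, Finset.sum_eq_sum_Ico_succ_bot hkR (f := fun i => w i * μ i)]
    have ih' := ih (k + 1) (by omega)
    rcases eq_or_lt_of_le (show k + 1 ≤ R by omega) with h | h
    · simp [← h]
    · have hmu : μ k ≤ μ (k + 1) := hmono k h
      have hW1 : 0 ≤ ∑ i ∈ Finset.Ico (k + 1) R, w i := hW (k + 1) (by omega)
      nlinarith [mul_le_mul_of_nonneg_left hmu hW1]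

lemma abel (R : ℕ) (w μ : ℕ → ℝ) (hmono : ∀ i, i + 1 < R → μ i ≤ μ (i + 1))
    (h0 : 0 ≤ μ 0)
    (hW : ∀ k, k ≤ R → 0 ≤ ∑ i ∈ Finset.Ico k R, w i) :
    0 ≤ ∑ i ∈ Finset.range R, w i * μ i := by
  have := abel_aux R w μ hmono hW R 0 (by omega)
  rw [Finset.range_eq_Ico]
  have h00 : 0 ≤ (∑ i ∈ Finset.Ico 0 R, w i) * μ 0 := mul_nonneg (hW 0 (by omega)) h0
  linarith

lemma step_claim (r : ℕ) (hr : 2 ≤ r) (μ : ℕ → ℝ)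
    (hmono : ∀ i, i + 1 < r + 1 → μ i ≤ μ (i + 1))
    (hpos : ∀ i, i < r + 1 → 0 ≤ μ i) :
    ∑ i ∈ Finset.range r, μ i ≤
      (((r : ℝ) + 1 - (((r+1)/2 : ℕ) : ℝ)) * μ ((r+1)/2)
        + ((r : ℝ) + 1 - ((r/2 : ℕ) : ℝ)) * μ (r/2)) / 2
      + ((r : ℝ) - 2) / 2 * μ r := by
  set a : ℕ := (r+1)/2 with ha
  set b : ℕ := r/2 with hb
  set A : ℝ := ((r : ℝ) + 1 - (a : ℝ)) / 2 with hA
  set B : ℝ := ((r : ℝ) + 1 - (b : ℝ)) / 2 with hB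
  set C : ℝ := ((r : ℝ) - 2) / 2 with hC
  set w : ℕ → ℝ := fun i =>
    (if i = a then A else 0) + (if i = b then B else 0) + (if i = r then C else 0)
      - (if i < r then 1 else 0) with hw
  have hW : ∀ k, k ≤ r + 1 → 0 ≤ ∑ i ∈ Finset.Ico k (r+1), w i := by
    intro k hk
    rcases eq_or_lt_of_le hk with h | h
    · simp [h]
    have hkr : k ≤ r := by omega
    have e : ∑ i ∈ Finset.Ico k (r+1), w i =
        (if a ∈ Finset.Ico k (r+1) then A else 0)
        + (if b ∈ Finset.Ico k (r+1) then B else 0)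
        + (if r ∈ Finset.Ico k (r+1) then C else 0)
        - ((r : ℝ) - (k : ℝ)) := by
      simp only [hw, Finset.sum_sub_distrib, Finset.sum_add_distrib, Finset.sum_ite_eq']
      congr 1
      rw [Finset.sum_Ico_succ_top hkr, if_neg (lt_irrefl r), add_zero]
      have h1 : ∀ i ∈ Finset.Ico k r, (if i < r then (1:ℝ) else 0) = 1 :=
        fun i hi => if_pos (Finset.mem_Ico.mp hi).2
      rw [Finset.sum_congr rfl h1, Finset.sum_const, Nat.card_Ico, nsmul_eq_mul, mul_one,
        Nat.cast_sub hkr]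
    rw [e]
    have ma : a ∈ Finset.Ico k (r+1) ↔ k ≤ a := by rw [Finset.mem_Ico]; omega
    have mb : b ∈ Finset.Ico k (r+1) ↔ k ≤ b := by rw [Finset.mem_Ico]; omega
    have mr : r ∈ Finset.Ico k (r+1) := Finset.mem_Ico.mpr ⟨hkr, by omega⟩
    simp only [ma, mb, if_pos mr]
    have hk0 : (0:ℝ) ≤ (k:ℝ) := Nat.cast_nonneg k
    obtain ⟨m, hm⟩ : ∃ m, r = 2*m ∨ r = 2*m+1 := ⟨r/2, by omega⟩
    rcases hm with h2 | h2
    · have ham : a = m := by omega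
      have hbm : b = m := by omega
      have hm1 : 1 ≤ m := by omega
      have hrr : (r:ℝ) = 2*(m:ℝ) := by rw [h2]; push_cast; ring
      have harr : (a:ℝ) = (m:ℝ) := by rw [ham]
      have hbrr : (b:ℝ) = (m:ℝ) := by rw [hbm]
      have hm1r : (1:ℝ) ≤ (m:ℝ) := by exact_mod_cast hm1
      rcases le_or_gt k m with hkm | hkm
      · rw [if_pos (by omega : k ≤ a), if_pos (by omega : k ≤ b)]
        rw [hA, hB, hC, hrr, harr, hbrr]; linarith
      · rw [if_neg (by omega : ¬ k ≤ a), if_neg (by omega : ¬ k ≤ b)]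
        have hkm' : (m:ℝ) + 1 ≤ (k:ℝ) := by exact_mod_cast hkm
        rw [hC, hrr]; linarith
    · have ham : a = m + 1 := by omega
      have hbm : b = m := by omega
      have hrr : (r:ℝ) = 2*(m:ℝ)+1 := by rw [h2]; push_cast; ring
      have harr : (a:ℝ) = (m:ℝ)+1 := by rw [ham]; push_cast; ring
      have hbrr : (b:ℝ) = (m:ℝ) := by rw [hbm]
      have hm0 : (0:ℝ) ≤ (m:ℝ) := Nat.cast_nonneg m
      rcases le_or_gt k m with hkm | hkm
      · rw [if_pos (by omega : k ≤ a), if_pos (by omega : k ≤ b)]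
        rw [hA, hB, hC, hrr, harr, hbrr]; linarith
      · rcases le_or_gt k (m+1) with hkm1 | hkm1
        · rw [if_pos (by omega : k ≤ a), if_neg (by omega : ¬ k ≤ b)]
          have h1 : (m:ℝ)+1 ≤ (k:ℝ) := by exact_mod_cast hkm
          rw [hA, hC, hrr, harr]; linarith
        · rw [if_neg (by omega : ¬ k ≤ a), if_neg (by omega : ¬ k ≤ b)]
          have : (m:ℝ) + 2 ≤ (k:ℝ) := by exact_mod_cast hkm1
          rw [hC, hrr]; linarith
  have key := abel (r+1) w μ hmono (hpos 0 (by omega)) hW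
  have expand : ∑ i ∈ Finset.range (r+1), w i * μ i =
      A * μ a + B * μ b + C * μ r - ∑ i ∈ Finset.range r, μ i := by
    have hpt : ∀ i ∈ Finset.range (r+1), w i * μ i =
        (if i = a then A * μ a else 0) + (if i = b then B * μ b else 0)
        + (if i = r then C * μ r else 0) - (if i < r then μ i else 0) := by
      intro i _
      simp only [hw]
      clear_value w A B C a b; clear hW hw hA hB hC ha hb
      split_ifs <;> simp_all <;> ring
    have hlast : ∑ i ∈ Finset.range (r+1), (if i < r then μ i else 0) =
        ∑ i ∈ Finset.range r, μ i := by
      rw [Finset.sum_range_succ, if_neg (lt_irrefl r), add_zero]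
      exact Finset.sum_congr rfl (fun i hi => if_pos (Finset.mem_range.mp hi))
    rw [Finset.sum_congr rfl hpt]
    simp only [Finset.sum_sub_distrib, Finset.sum_add_distrib, Finset.sum_ite_eq']
    rw [hlast, if_pos (by simp only [Finset.mem_range]; omega),
      if_pos (by simp only [Finset.mem_range]; omega), if_pos (by simp only [Finset.mem_range]; omega)]
  rw [expand] at key
  have hab : (a:ℝ) + (b:ℝ) = (r:ℝ) := by
    have : a + b = r := by omega
    exact_mod_cast this
  rw [hA, hB, hC] at key
  rw [hC]
  ring_nf at key ⊢
  linarith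


lemma KI (μ : ℕ → ℝ) (hmono : ∀ i, μ i ≤ μ (i + 1)) (hpos : ∀ i, 0 ≤ μ i) :
    ∀ r, 2 ≤ r →
      (3 / 2) * ∑ i ∈ Finset.range r, ((r : ℝ) - (i : ℝ)) * μ i ≤
        (∑ j ∈ Finset.Icc 1 r,
            (((j : ℝ) - ((j / 2 : ℕ) : ℝ)) * μ (j / 2)
              + ((j : ℝ) - (((j - 1) / 2 : ℕ) : ℝ)) * μ ((j - 1) / 2)) / 2)
          + (r : ℝ) / 2 * ∑ i ∈ Finset.range r, μ i := by
  intro r hr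
  induction r, hr using Nat.le_induction with
  | base =>
    norm_num [Finset.sum_range_succ, show Finset.Icc 1 2 = {1, 2} from rfl]
    linarith [hpos 0, hpos 1, hmono 0]
  | succ r hr ih =>
    have hmloc : ∀ i, i + 1 < r + 1 → μ i ≤ μ (i + 1) := fun i _ => hmono i
    have hploc : ∀ i, i < r + 1 → 0 ≤ μ i := fun i _ => hpos i
    have sc := step_claim r hr μ hmloc hploc
    have e1 : ∑ i ∈ Finset.range (r + 1), (((r + 1 : ℕ) : ℝ) - (i : ℝ)) * μ i =
        (∑ i ∈ Finset.range r, ((r : ℝ) - (i : ℝ)) * μ i)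
          + (∑ i ∈ Finset.range r, μ i) + μ r := by
      rw [Finset.sum_range_succ]
      have h : ∀ i ∈ Finset.range r, (((r + 1 : ℕ) : ℝ) - (i : ℝ)) * μ i =
          ((r : ℝ) - (i : ℝ)) * μ i + μ i := by intro i _; push_cast; ring
      rw [Finset.sum_congr rfl h, Finset.sum_add_distrib]
      push_cast; ring
    have e2 : ∑ j ∈ Finset.Icc 1 (r + 1),
          (((j : ℝ) - ((j / 2 : ℕ) : ℝ)) * μ (j / 2)
            + ((j : ℝ) - (((j - 1) / 2 : ℕ) : ℝ)) * μ ((j - 1) / 2)) / 2 =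
        (∑ j ∈ Finset.Icc 1 r,
          (((j : ℝ) - ((j / 2 : ℕ) : ℝ)) * μ (j / 2)
            + ((j : ℝ) - (((j - 1) / 2 : ℕ) : ℝ)) * μ ((j - 1) / 2)) / 2)
          + ((((r + 1 : ℕ) : ℝ) - (((r + 1) / 2 : ℕ) : ℝ)) * μ ((r + 1) / 2)
            + (((r + 1 : ℕ) : ℝ) - (((r + 1 - 1) / 2 : ℕ) : ℝ)) * μ ((r + 1 - 1) / 2)) / 2 :=
      Finset.sum_Icc_succ_top (by omega) _
    have e3 : ∑ i ∈ Finset.range (r + 1), μ i = (∑ i ∈ Finset.range r, μ i) + μ r :=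
      Finset.sum_range_succ _ _
    rw [e1, e2, e3]
    have hrm : r + 1 - 1 = r := by omega
    rw [hrm]
    push_cast
    linarith [ih, sc]

/-- combinatorial core of the theorem that `Quickest-increment`
is a 3/2-approximation algorithm for unit-capacity instances. -/
theorem quickest_increment_three_halves_approx
    (r : ℕ) (hr : 2 ≤ r) (T F : ℝ) (hF : (r : ℝ) ≤ F)
    (μ c : ℕ → ℝ) (hX : memX r μ c T) :
    T * F - (∑ j ∈ Finset.Icc 1 r, c j) ≤
      (3 / 2) * (T * F - ∑ i ∈ Finset.range r, ((r : ℝ) - (i : ℝ)) * μ i) := by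
  obtain ⟨hmono, hc, hT, hc0, hpos, hcpos⟩ := hX
  set μ' : ℕ → ℝ := fun i => μ (min i (r - 1)) with hμ'
  have hmono' : ∀ i, μ' i ≤ μ' (i + 1) := by
    intro i
    simp only [hμ']
    rcases lt_or_ge (i + 1) r with h | h
    · rw [show min i (r - 1) = i by omega, show min (i + 1) (r - 1) = i + 1 by omega]
      exact hmono i h
    · rw [show min i (r - 1) = min (i + 1) (r - 1) by omega]
  have hpos' : ∀ i, 0 ≤ μ' i := fun i => hpos _ (by omega)
  have ki := KI μ' hmono' hpos' r hr
  have eq1 : ∑ i ∈ Finset.range r, ((r : ℝ) - (i : ℝ)) * μ' i =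
      ∑ i ∈ Finset.range r, ((r : ℝ) - (i : ℝ)) * μ i := by
    refine Finset.sum_congr rfl fun i hi => ?_
    have := Finset.mem_range.mp hi
    simp only [hμ', show min i (r - 1) = i by omega]
  have eq2 : ∑ i ∈ Finset.range r, μ' i = ∑ i ∈ Finset.range r, μ i := by
    refine Finset.sum_congr rfl fun i hi => ?_
    have := Finset.mem_range.mp hi
    simp only [hμ', show min i (r - 1) = i by omega]
  have eq3 : ∑ j ∈ Finset.Icc 1 r,
      (((j : ℝ) - ((j / 2 : ℕ) : ℝ)) * μ' (j / 2)
        + ((j : ℝ) - (((j - 1) / 2 : ℕ) : ℝ)) * μ' ((j - 1) / 2)) / 2 =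
      ∑ j ∈ Finset.Icc 1 r,
      (((j : ℝ) - ((j / 2 : ℕ) : ℝ)) * μ (j / 2)
        + ((j : ℝ) - (((j - 1) / 2 : ℕ) : ℝ)) * μ ((j - 1) / 2)) / 2 := by
    refine Finset.sum_congr rfl fun j hj => ?_
    obtain ⟨h1, h2⟩ := Finset.mem_Icc.mp hj
    simp only [hμ', show min (j / 2) (r - 1) = j / 2 by omega,
      show min ((j - 1) / 2) (r - 1) = (j - 1) / 2 by omega]
  rw [eq1, eq2, eq3] at ki
  have hH : ∑ j ∈ Finset.Icc 1 r,
      (((j : ℝ) - ((j / 2 : ℕ) : ℝ)) * μ (j / 2)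
        + ((j : ℝ) - (((j - 1) / 2 : ℕ) : ℝ)) * μ ((j - 1) / 2)) / 2 ≤
      ∑ j ∈ Finset.Icc 1 r, c j := by
    refine Finset.sum_le_sum fun j hj => ?_
    obtain ⟨h1, h2⟩ := Finset.mem_Icc.mp hj
    have l1 := hc (j / 2) j (by omega) h2
    have l2 := hc ((j - 1) / 2) j (by omega) h2
    linarith
  have hS : 0 ≤ ∑ i ∈ Finset.range r, μ i :=
    Finset.sum_nonneg fun i hi => hpos i (Finset.mem_range.mp hi)
  have hF0 : (0 : ℝ) ≤ F := le_trans (by positivity) hF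
  have hTF : (r : ℝ) * ∑ i ∈ Finset.range r, μ i ≤ T * F := by
    calc (r : ℝ) * ∑ i ∈ Finset.range r, μ i ≤ F * ∑ i ∈ Finset.range r, μ i :=
          mul_le_mul_of_nonneg_right hF hS
      _ ≤ F * T := mul_le_mul_of_nonneg_left hT hF0
      _ = T * F := mul_comm _ _
  nlinarith [ki, hH, hTF]
end

section
/- Let r ≥ 1 be an integer and let γ ≥ 1 be a real number such that Y(r,γ) is nonempty. Then for all real numbers T, F with F ≥ r and every triple (μ, c, T) lying in X(r), one has T·F − Σ_{j=1}^{r} c_j ≤ γ·(T·F − Σ_{i=0}^{r−1} (r−i)·μ_i). -/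
/-- `(x, y, z)` lies in the polyhedron `Y(r, γ)` from the paper.
Here `x` is indexed by integers so that `x (-1)` makes sense. -/
def memY (r : ℕ) (γ : ℝ) (x : ℤ → ℝ) (y : ℕ → ℕ → ℝ) (z : ℝ) : Prop :=
  (∀ j, 1 ≤ j → j ≤ r → (∑ i ∈ Finset.range j, y i j) ≤ 1) ∧
  (∀ i : ℕ, i < r →
    z + (∑ j ∈ Finset.Icc (i + 1) r, ((j : ℝ) - (i : ℝ)) * y i j)
      + x (i : ℤ) - x ((i : ℤ) - 1) ≥ γ * ((r : ℝ) - (i : ℝ))) ∧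
  z ≤ (r : ℝ) * (γ - 1) ∧
  x (-1) = 0 ∧
  x ((r : ℤ) - 1) = 0 ∧
  0 ≤ z ∧
  (∀ i : ℕ, (i : ℤ) ≤ (r : ℤ) - 2 → 0 ≤ x (i : ℤ)) ∧
  (∀ i j : ℕ, i < j → j ≤ r → 0 ≤ y i j)

/-- sufficient condition for `Quickest-increment` to be a
`γ`-approximation algorithm on all instances with `F - f = r`. -/
theorem quickest_increment_gamma_approx_of_Y_nonempty
    (r : ℕ) (hr : 1 ≤ r) (γ : ℝ) (hγ : 1 ≤ γ)
    (hY : ∃ (x : ℤ → ℝ) (y : ℕ → ℕ → ℝ) (z : ℝ), memY r γ x y z) :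
    ∀ (T F : ℝ) (μ c : ℕ → ℝ), (r : ℝ) ≤ F → memX r μ c T →
      T * F - (∑ j ∈ Finset.Icc 1 r, c j) ≤
        γ * (T * F - ∑ i ∈ Finset.range r, ((r : ℝ) - (i : ℝ)) * μ i) := by
  obtain ⟨x, y, z, hY1, hY2, hY3, hx0, hxr, hz0, hxnn, hynn⟩ := hY
  intro T F μ c hF hX
  obtain ⟨hmono, hμc, hsum, hc0, hμnn, hcnn⟩ := hX
  set S : ℝ := ∑ i ∈ Finset.range r, ((r : ℝ) - (i : ℝ)) * μ i with hS
  set C : ℝ := ∑ j ∈ Finset.Icc 1 r, c j with hC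
  have hμsum_nonneg : 0 ≤ ∑ i ∈ Finset.range r, μ i :=
    Finset.sum_nonneg fun i hi => hμnn i (Finset.mem_range.mp hi)
  have hT : 0 ≤ T := le_trans hμsum_nonneg hsum
  -- Step 1: γ * S ≤ ∑ μ i * (constraint i)
  have step1 : γ * S ≤ ∑ i ∈ Finset.range r,
      μ i * (z + (∑ j ∈ Finset.Icc (i + 1) r, ((j : ℝ) - (i : ℝ)) * y i j)
        + x (i : ℤ) - x ((i : ℤ) - 1)) := by
    rw [hS, Finset.mul_sum]
    apply Finset.sum_le_sum
    intro i hi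
    have hi' := Finset.mem_range.mp hi
    have h := mul_le_mul_of_nonneg_left (hY2 i hi') (hμnn i hi')
    calc γ * (((r : ℝ) - (i : ℝ)) * μ i)
        = μ i * (γ * ((r : ℝ) - (i : ℝ))) := by ring
      _ ≤ _ := h
  -- Expand the sum
  have hExpand : (∑ i ∈ Finset.range r,
      μ i * (z + (∑ j ∈ Finset.Icc (i + 1) r, ((j : ℝ) - (i : ℝ)) * y i j)
        + x (i : ℤ) - x ((i : ℤ) - 1)))
      = (∑ i ∈ Finset.range r, μ i) * z
        + (∑ i ∈ Finset.range r, ∑ j ∈ Finset.Icc (i + 1) r,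
            μ i * (((j : ℝ) - (i : ℝ)) * y i j))
        + (∑ i ∈ Finset.range r, μ i * (x (i : ℤ) - x ((i : ℤ) - 1))) := by
    rw [Finset.sum_mul, ← Finset.sum_add_distrib, ← Finset.sum_add_distrib]
    apply Finset.sum_congr rfl
    intro i _
    rw [← Finset.mul_sum]
    ring
  -- Bound the double sum by C
  have hD : (∑ i ∈ Finset.range r, ∑ j ∈ Finset.Icc (i + 1) r,
      μ i * (((j : ℝ) - (i : ℝ)) * y i j)) ≤ C := by
    have step2 : (∑ i ∈ Finset.range r, ∑ j ∈ Finset.Icc (i + 1) r,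
        μ i * (((j : ℝ) - (i : ℝ)) * y i j))
        ≤ ∑ i ∈ Finset.range r, ∑ j ∈ Finset.Icc (i + 1) r, c j * y i j := by
      apply Finset.sum_le_sum
      intro i hi
      apply Finset.sum_le_sum
      intro j hj
      rw [Finset.mem_Icc] at hj
      have h1 : ((j : ℝ) - (i : ℝ)) * μ i ≤ c j := hμc i j (by omega) hj.2
      have h2 : 0 ≤ y i j := hynn i j (by omega) hj.2
      calc μ i * (((j : ℝ) - (i : ℝ)) * y i j)
          = (((j : ℝ) - (i : ℝ)) * μ i) * y i j := by ring
        _ ≤ c j * y i j := mul_le_mul_of_nonneg_right h1 h2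
    have step3 : (∑ i ∈ Finset.range r, ∑ j ∈ Finset.Icc (i + 1) r, c j * y i j)
        = ∑ j ∈ Finset.Icc 1 r, ∑ i ∈ Finset.range j, c j * y i j := by
      apply Finset.sum_comm'
      intro i j
      simp only [Finset.mem_range, Finset.mem_Icc]
      omega
    have step4 : (∑ j ∈ Finset.Icc 1 r, ∑ i ∈ Finset.range j, c j * y i j) ≤ C := by
      rw [hC]
      apply Finset.sum_le_sum
      intro j hj
      rw [Finset.mem_Icc] at hj
      rw [← Finset.mul_sum]
      exact mul_le_of_le_one_right (hcnn j hj.1 hj.2) (hY1 j hj.1 hj.2)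
    linarith
  -- Abel summation bound
  have abel : ∀ n, n ≤ r → 1 ≤ n →
      (∑ i ∈ Finset.range n, μ i * (x (i : ℤ) - x ((i : ℤ) - 1)))
        ≤ μ (n - 1) * x ((n : ℤ) - 1) := by
    intro n
    induction n with
    | zero => intro _ h; omega
    | succ n ih =>
      intro hnr _
      rcases Nat.eq_zero_or_pos n with h0 | hn
      · subst h0
        simp [Finset.sum_range_one, hx0]
      · rw [Finset.sum_range_succ]
        have h2 := ih (by omega) hn
        have hmono' : μ (n - 1) ≤ μ n := by
          have := hmono (n - 1) (by omega)
          rwa [Nat.sub_add_cancel hn] at this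
        have hxn : 0 ≤ x ((n : ℤ) - 1) := by
          have := hxnn (n - 1) (by omega)
          have hc : ((n - 1 : ℕ) : ℤ) = (n : ℤ) - 1 := by omega
          rwa [hc] at this
        have hrw : ((n + 1 : ℕ) : ℤ) - 1 = (n : ℤ) := by push_cast; ring
        simp only [Nat.add_sub_cancel, hrw]
        nlinarith [mul_le_mul_of_nonneg_right hmono' hxn]
  have hP3 : (∑ i ∈ Finset.range r, μ i * (x (i : ℤ) - x ((i : ℤ) - 1))) ≤ 0 := by
    have := abel r le_rfl hr
    rw [hxr] at this
    simpa using this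
  -- z-term bound
  have hz1 : (∑ i ∈ Finset.range r, μ i) * z ≤ T * z :=
    mul_le_mul_of_nonneg_right hsum hz0
  have hz2 : T * z ≤ (γ - 1) * (T * F) := by
    have h1 : T * z ≤ T * ((r : ℝ) * (γ - 1)) := mul_le_mul_of_nonneg_left hY3 hT
    nlinarith [h1, mul_nonneg (mul_nonneg (sub_nonneg.mpr hγ) hT) (sub_nonneg.mpr hF)]
  -- key inequality
  have key : γ * S ≤ (γ - 1) * (T * F) + C := by
    calc γ * S ≤ _ := step1
      _ = _ := hExpand
      _ ≤ (γ - 1) * (T * F) + C := by linarith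
  nlinarith [key]
end

section
/- Let r ≥ 1 be an integer and γ a real number, and suppose there exists a triple (x, y, z) lying in Y(r,γ). Then every triple (μ, c, T) lying in X(r) satisfies r·(1−γ)·T − Σ_{j=1}^{r} c_j + γ·Σ_{i=0}^{r−1} (r−i)·μ_i ≤ 0. -/
/-- the weak-duality step — a point in `Y(r, γ)` certifies the
validity of the inequality `r(1-γ)T - Σ c_j + γ Σ (r-i) μ_i ≤ 0` over `X(r)`. -/
theorem weak_duality_X_Y
    (r : ℕ) (hr : 1 ≤ r) (γ : ℝ)
    (hY : ∃ (x : ℤ → ℝ) (y : ℕ → ℕ → ℝ) (z : ℝ), memY r γ x y z) :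
    ∀ (μ c : ℕ → ℝ) (T : ℝ), memX r μ c T →
      (r : ℝ) * (1 - γ) * T - (∑ j ∈ Finset.Icc 1 r, c j)
        + γ * (∑ i ∈ Finset.range r, ((r : ℝ) - (i : ℝ)) * μ i) ≤ 0 := by
  obtain ⟨x, y, z, hA, hB, hC, hxm1, hxr1, hz0, hx0, hy0⟩ := hY
  rintro μ c T ⟨hmono, hmc, hT, hc00, hμ0, hc0⟩
  obtain ⟨n, rfl⟩ : ∃ n, r = n + 1 := ⟨r - 1, (Nat.succ_pred_eq_of_pos hr).symm⟩
  have hT0 : 0 ≤ T :=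
    le_trans (Finset.sum_nonneg fun i hi => hμ0 i (Finset.mem_range.mp hi)) hT
  -- Step 1: multiply dual constraints B_i by μ_i ≥ 0
  have h1 : γ * (∑ i ∈ Finset.range (n + 1), (((n + 1 : ℕ) : ℝ) - (i : ℝ)) * μ i) ≤
      ∑ i ∈ Finset.range (n + 1),
        (z + (∑ j ∈ Finset.Icc (i + 1) (n + 1), ((j : ℝ) - (i : ℝ)) * y i j)
          + x (i : ℤ) - x ((i : ℤ) - 1)) * μ i := by
    rw [Finset.mul_sum]
    refine Finset.sum_le_sum fun i hi => ?_
    have hiB := hB i (Finset.mem_range.mp hi)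
    have hmi := hμ0 i (Finset.mem_range.mp hi)
    have : γ * ((((n + 1 : ℕ) : ℝ) - (i : ℝ)) * μ i)
        = (γ * (((n + 1 : ℕ) : ℝ) - (i : ℝ))) * μ i := by ring
    rw [this]
    exact mul_le_mul_of_nonneg_right hiB hmi
  -- Step 2: split the RHS into three pieces
  have hsplit : (∑ i ∈ Finset.range (n + 1),
        (z + (∑ j ∈ Finset.Icc (i + 1) (n + 1), ((j : ℝ) - (i : ℝ)) * y i j)
          + x (i : ℤ) - x ((i : ℤ) - 1)) * μ i)
      = z * (∑ i ∈ Finset.range (n + 1), μ i)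
        + (∑ i ∈ Finset.range (n + 1),
            ∑ j ∈ Finset.Icc (i + 1) (n + 1), (((j : ℝ) - (i : ℝ)) * y i j) * μ i)
        + (∑ i ∈ Finset.range (n + 1), (x (i : ℤ) - x ((i : ℤ) - 1)) * μ i) := by
    rw [Finset.mul_sum, ← Finset.sum_add_distrib, ← Finset.sum_add_distrib]
    refine Finset.sum_congr rfl fun i _ => ?_
    have hexp : (z + (∑ j ∈ Finset.Icc (i + 1) (n + 1), ((j : ℝ) - (i : ℝ)) * y i j)
          + x (i : ℤ) - x ((i : ℤ) - 1)) * μ i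
        = z * μ i
          + (∑ j ∈ Finset.Icc (i + 1) (n + 1), ((j : ℝ) - (i : ℝ)) * y i j) * μ i
          + (x (i : ℤ) - x ((i : ℤ) - 1)) * μ i := by ring
    rw [hexp, Finset.sum_mul]
  -- Bound for the z-part
  have hz : z * (∑ i ∈ Finset.range (n + 1), μ i) ≤ ((n + 1 : ℕ) : ℝ) * (γ - 1) * T :=
    le_trans (mul_le_mul_of_nonneg_left hT hz0) (mul_le_mul_of_nonneg_right hC hT0)
  -- Bound for the y-part
  have hy : (∑ i ∈ Finset.range (n + 1),
        ∑ j ∈ Finset.Icc (i + 1) (n + 1), (((j : ℝ) - (i : ℝ)) * y i j) * μ i)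
      ≤ ∑ j ∈ Finset.Icc 1 (n + 1), c j := by
    have step1 : (∑ i ∈ Finset.range (n + 1),
          ∑ j ∈ Finset.Icc (i + 1) (n + 1), (((j : ℝ) - (i : ℝ)) * y i j) * μ i)
        ≤ ∑ i ∈ Finset.range (n + 1),
            ∑ j ∈ Finset.Icc (i + 1) (n + 1), y i j * c j := by
      refine Finset.sum_le_sum fun i _ => Finset.sum_le_sum fun j hj => ?_
      obtain ⟨hj1, hj2⟩ := Finset.mem_Icc.mp hj
      have hij : i < j := Nat.lt_of_succ_le hj1
      have hy' := hy0 i j hij hj2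
      have hmc' := hmc i j hij hj2
      calc (((j : ℝ) - (i : ℝ)) * y i j) * μ i
          = y i j * (((j : ℝ) - (i : ℝ)) * μ i) := by ring
        _ ≤ y i j * c j := mul_le_mul_of_nonneg_left hmc' hy'
    have step2 : (∑ i ∈ Finset.range (n + 1),
          ∑ j ∈ Finset.Icc (i + 1) (n + 1), y i j * c j)
        = ∑ j ∈ Finset.Icc 1 (n + 1), ∑ i ∈ Finset.range j, y i j * c j := by
      refine Finset.sum_comm' ?_
      intro i j
      simp only [Finset.mem_range, Finset.mem_Icc]
      omega
    have step3 : (∑ j ∈ Finset.Icc 1 (n + 1), ∑ i ∈ Finset.range j, y i j * c j)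
        ≤ ∑ j ∈ Finset.Icc 1 (n + 1), c j := by
      refine Finset.sum_le_sum fun j hj => ?_
      obtain ⟨hj1, hj2⟩ := Finset.mem_Icc.mp hj
      have hcj := hc0 j hj1 hj2
      calc (∑ i ∈ Finset.range j, y i j * c j)
          = (∑ i ∈ Finset.range j, y i j) * c j := by rw [Finset.sum_mul]
        _ ≤ 1 * c j := mul_le_mul_of_nonneg_right (hA j hj1 hj2) hcj
        _ = c j := one_mul _
    calc _ ≤ _ := step1
      _ = _ := step2
      _ ≤ _ := step3
  -- Bound for the telescoping x-part (Abel summation)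
  have hxn : x (n : ℤ) = 0 := by
    have hcast : ((n + 1 : ℕ) : ℤ) - 1 = (n : ℤ) := by push_cast; ring
    rw [hcast] at hxr1; exact hxr1
  have habel : (∑ i ∈ Finset.range (n + 1), (x (i : ℤ) - x ((i : ℤ) - 1)) * μ i) ≤ 0 := by
    have hsub : (∑ i ∈ Finset.range (n + 1), (x (i : ℤ) - x ((i : ℤ) - 1)) * μ i)
        = (∑ i ∈ Finset.range (n + 1), x (i : ℤ) * μ i)
          - (∑ i ∈ Finset.range (n + 1), x ((i : ℤ) - 1) * μ i) := by
      rw [← Finset.sum_sub_distrib]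
      exact Finset.sum_congr rfl fun i _ => by ring
    have hfirst : (∑ i ∈ Finset.range (n + 1), x (i : ℤ) * μ i)
        = ∑ i ∈ Finset.range n, x (i : ℤ) * μ i := by
      rw [Finset.sum_range_succ, hxn]
      ring
    have hsecond : (∑ i ∈ Finset.range (n + 1), x ((i : ℤ) - 1) * μ i)
        = ∑ i ∈ Finset.range n, x (i : ℤ) * μ (i + 1) := by
      rw [Finset.sum_range_succ']
      simp only [Nat.cast_zero]
      rw [show ((0 : ℤ) - 1) = (-1 : ℤ) by ring, hxm1, zero_mul, add_zero]
      refine Finset.sum_congr rfl fun i _ => ?_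
      have : ((i + 1 : ℕ) : ℤ) - 1 = (i : ℤ) := by push_cast; ring
      rw [this]
    rw [hsub, hfirst, hsecond, ← Finset.sum_sub_distrib]
    refine Finset.sum_nonpos fun i hi => ?_
    have hin : i < n := Finset.mem_range.mp hi
    have hxi : 0 ≤ x (i : ℤ) := hx0 i (by push_cast; omega)
    have hmono' : μ i ≤ μ (i + 1) := hmono i (by omega)
    have : x (i : ℤ) * μ i - x (i : ℤ) * μ (i + 1) = x (i : ℤ) * (μ i - μ (i + 1)) := by ring
    rw [this]
    exact mul_nonpos_of_nonneg_of_nonpos hxi (by linarith)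
  rw [hsplit] at h1
  linarith
end

section
/- Let r ≥ 2 be an integer and set s = ⌊(r+2)/3⌋. Then there exist nonnegative real numbers y_{ij}, for 0 ≤ i ≤ s and i+1 ≤ j ≤ r, such that Σ_{j=i+1}^{r} (j−i)·y_{ij} ≥ r − (3/2)·i for every 0 ≤ i ≤ s, and Σ_{i=0}^{min(j−1, s)} y_{ij} ≤ 1 for every 1 ≤ j ≤ r. -/
set_option maxHeartbeats 1600000

lemma sum_dist_aux (i n : ℕ) :
    ∑ j ∈ Finset.Icc (i + 1) (i + n), ((j : ℝ) - (i : ℝ)) = n * (n + 1) / 2 := by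
  induction n with
  | zero => simp
  | succ n ih =>
      rw [show i + (n + 1) = (i + n) + 1 from rfl,
        Finset.sum_Icc_succ_top (by omega), ih]
      push_cast
      ring

/-- auxiliary feasibility lemma (Lemma on the initial segment)
used to exhibit a point of `Y(r, 3/2)`. Here `s = ⌊(r+2)/3⌋` is natural-number
(floor) division. -/
theorem initial_segment_feasibility (r : ℕ) (hr : 2 ≤ r) :
    ∃ y : ℕ → ℕ → ℝ,
      (∀ i j, i ≤ (r + 2) / 3 → i + 1 ≤ j → j ≤ r → 0 ≤ y i j) ∧
      (∀ i, i ≤ (r + 2) / 3 →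
        (∑ j ∈ Finset.Icc (i + 1) r, ((j : ℝ) - (i : ℝ)) * y i j) ≥
          (r : ℝ) - (3 / 2) * (i : ℝ)) ∧
      (∀ j, 1 ≤ j → j ≤ r →
        (∑ i ∈ Finset.Icc 0 (min (j - 1) ((r + 2) / 3)), y i j) ≤ 1) := by
  rcases lt_or_ge r 8 with h8 | h8
  · -- small cases r = 2,…,7 : explicit tables
    interval_cases r
    · -- r = 2
      refine ⟨fun i j => if i = 0 ∧ j = 1 then 1 else if i = 0 ∧ j = 2 then 1/2
        else if i = 1 ∧ j = 2 then 1/2 else 0, ?_, ?_, ?_⟩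
      · intro i j _ _ _; dsimp only; split_ifs <;> norm_num
      · intro i hi
        interval_cases i <;>
          (rw [← Finset.Ico_add_one_right_eq_Icc, Finset.sum_Ico_eq_sum_range] <;>
            norm_num [Finset.sum_range_succ])
      · intro j hj1 hj2
        interval_cases j <;>
          (rw [← Finset.Ico_add_one_right_eq_Icc, Finset.sum_Ico_eq_sum_range] <;>
            norm_num [Finset.sum_range_succ])
    · -- r = 3
      refine ⟨fun i j => if i = 0 ∧ j = 1 then 1 else if i = 0 ∧ j = 3 then 3/4
        else if i = 1 ∧ j = 2 then 1 else if i = 1 ∧ j = 3 then 1/4 else 0,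
        ?_, ?_, ?_⟩
      · intro i j _ _ _; dsimp only; split_ifs <;> norm_num
      · intro i hi
        interval_cases i <;>
          (rw [← Finset.Ico_add_one_right_eq_Icc, Finset.sum_Ico_eq_sum_range] <;>
            norm_num [Finset.sum_range_succ])
      · intro j hj1 hj2
        interval_cases j <;>
          (rw [← Finset.Ico_add_one_right_eq_Icc, Finset.sum_Ico_eq_sum_range] <;>
            norm_num [Finset.sum_range_succ])
    · -- r = 4
      refine ⟨fun i j => if i = 0 ∧ j = 1 then 1/2 else if i = 0 ∧ j = 2 then 1
        else if i = 0 ∧ j = 3 then 1/2 else if i = 1 ∧ j = 3 then 1/2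
        else if i = 1 ∧ j = 4 then 1/2 else if i = 2 ∧ j = 4 then 1/2 else 0,
        ?_, ?_, ?_⟩
      · intro i j _ _ _; dsimp only; split_ifs <;> norm_num
      · intro i hi
        interval_cases i <;>
          (rw [← Finset.Ico_add_one_right_eq_Icc, Finset.sum_Ico_eq_sum_range] <;>
            norm_num [Finset.sum_range_succ])
      · intro j hj1 hj2
        interval_cases j <;>
          (rw [← Finset.Ico_add_one_right_eq_Icc, Finset.sum_Ico_eq_sum_range] <;>
            norm_num [Finset.sum_range_succ])
    · -- r = 5
      refine ⟨fun i j => if i = 0 ∧ j = 2 then 1/2 else if i = 0 ∧ j = 3 then 11/12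
        else if i = 0 ∧ j = 4 then 1/3 else if i = 1 ∧ j = 3 then 1/12
        else if i = 1 ∧ j = 4 then 2/3 else if i = 1 ∧ j = 5 then 1/3
        else if i = 2 ∧ j = 5 then 2/3 else 0, ?_, ?_, ?_⟩
      · intro i j _ _ _; dsimp only; split_ifs <;> norm_num
      · intro i hi
        interval_cases i <;>
          (rw [← Finset.Ico_add_one_right_eq_Icc, Finset.sum_Ico_eq_sum_range] <;>
            norm_num [Finset.sum_range_succ])
      · intro j hj1 hj2
        interval_cases j <;>
          (rw [← Finset.Ico_add_one_right_eq_Icc, Finset.sum_Ico_eq_sum_range] <;>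
            norm_num [Finset.sum_range_succ])
    · -- r = 6
      refine ⟨fun i j => if i = 0 ∧ j = 3 then 1 else if i = 0 ∧ j = 4 then 11/12
        else if i = 0 ∧ j = 5 then 1/4 else if i = 1 ∧ j = 4 then 1/12
        else if i = 1 ∧ j = 5 then 3/4 else if i = 1 ∧ j = 6 then 1/4
        else if i = 2 ∧ j = 6 then 3/4 else 0, ?_, ?_, ?_⟩
      · intro i j _ _ _; dsimp only; split_ifs <;> norm_num
      · intro i hi
        interval_cases i <;>
          (rw [← Finset.Ico_add_one_right_eq_Icc, Finset.sum_Ico_eq_sum_range] <;>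
            norm_num [Finset.sum_range_succ])
      · intro j hj1 hj2
        interval_cases j <;>
          (rw [← Finset.Ico_add_one_right_eq_Icc, Finset.sum_Ico_eq_sum_range] <;>
            norm_num [Finset.sum_range_succ])
    · -- r = 7
      refine ⟨fun i j => if i = 0 ∧ j = 3 then 1 else if i = 0 ∧ j = 4 then 1
        else if i = 1 ∧ j = 5 then 1 else if i = 1 ∧ j = 6 then 1/3
        else if i = 2 ∧ j = 6 then 1/2 else if i = 2 ∧ j = 7 then 1/2
        else if i = 3 ∧ j = 6 then 1/6 else if i = 3 ∧ j = 7 then 1/2 else 0,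
        ?_, ?_, ?_⟩
      · intro i j _ _ _; dsimp only; split_ifs <;> norm_num
      · intro i hi
        interval_cases i <;>
          (rw [← Finset.Ico_add_one_right_eq_Icc, Finset.sum_Ico_eq_sum_range] <;>
            norm_num [Finset.sum_range_succ])
      · intro j hj1 hj2
        interval_cases j <;>
          (rw [← Finset.Ico_add_one_right_eq_Icc, Finset.sum_Ico_eq_sum_range] <;>
            norm_num [Finset.sum_range_succ])
  · -- general case r ≥ 8 : constant y = 1/(s+1)
    set s : ℕ := (r + 2) / 3 with hs
    have hs3 : 3 * s ≤ r + 2 := by omega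
    have hr3 : r ≤ 3 * s := by omega
    refine ⟨fun _ _ => 1 / ((s : ℝ) + 1), ?_, ?_, ?_⟩
    · intro i j _ _ _; positivity
    · intro i hi
      have hir : i ≤ r := by omega
      obtain ⟨n, hn⟩ : ∃ n, r = i + n := ⟨r - i, by omega⟩
      subst hn
      rw [← Finset.sum_mul, sum_dist_aux]
      have hspos : (0 : ℝ) < (s : ℝ) + 1 := by positivity
      rw [ge_iff_le, mul_one_div, le_div_iff₀ hspos]
      obtain hc | hc | hc : i + n + 2 = 3 * s ∨ i + n + 1 = 3 * s ∨ i + n = 3 * s := by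
        omega
      · -- r = 3s - 2, here s ≥ 4
        have hs4 : (4 : ℝ) ≤ (s : ℝ) := by exact_mod_cast (by omega : 4 ≤ s)
        have hc' : (i : ℝ) + n + 2 = 3 * s := by exact_mod_cast congrArg (Nat.cast (R := ℝ)) hc
        push_cast
        nlinarith [sq_nonneg (2 * (n : ℝ) - 3 * (s : ℝ) - 2), sq_nonneg ((s : ℝ) - 4)]
      · -- r = 3s - 1, here s ≥ 3
        have hs4 : (3 : ℝ) ≤ (s : ℝ) := by exact_mod_cast (by omega : 3 ≤ s)
        have hc' : (i : ℝ) + n + 1 = 3 * s := by exact_mod_cast congrArg (Nat.cast (R := ℝ)) hc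
        push_cast
        nlinarith [sq_nonneg (2 * (n : ℝ) - 3 * (s : ℝ) - 2), sq_nonneg ((s : ℝ) - 3)]
      · -- r = 3s, here s ≥ 3
        have hs4 : (3 : ℝ) ≤ (s : ℝ) := by exact_mod_cast (by omega : 3 ≤ s)
        have hc' : (i : ℝ) + n = 3 * s := by exact_mod_cast congrArg (Nat.cast (R := ℝ)) hc
        push_cast
        nlinarith [sq_nonneg (2 * (n : ℝ) - 3 * (s : ℝ) - 2), sq_nonneg ((s : ℝ) - 3)]
    · intro j hj1 hj2
      rw [Finset.sum_const, Nat.card_Icc, Nat.sub_zero, nsmul_eq_mul, mul_one_div,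
        div_le_one (by positivity)]
      have h1 : min (j - 1) s + 1 ≤ s + 1 := by
        have := min_le_right (j - 1) s; omega
      exact_mod_cast h1
end

section
/- Let f and r be natural numbers with r ≤ f, set F = f + r, and let T, c, z*, z₁ be real numbers satisfying c ≥ r, T ≥ c, z* ≤ T·F − r(r−1)/2 − c, and z₁ ≥ T·F − c·(r+1)/2. Then z* ≤ (4/3)·z₁. -/
/-- arithmetic content of Case 1 (`r ≤ f`) of the proposition
that `Quickest-to-ultimate` is a 4/3-approximation for incremental maximum
matching. Here `F = f + r`. -/
theorem matching_four_thirds_case_one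
    (f r : ℕ) (hrf : r ≤ f) (T c zstar z1 : ℝ)
    (hc : (r : ℝ) ≤ c) (hT : c ≤ T)
    (hzstar : zstar ≤ T * ((f : ℝ) + (r : ℝ)) - (r : ℝ) * ((r : ℝ) - 1) / 2 - c)
    (hz1 : z1 ≥ T * ((f : ℝ) + (r : ℝ)) - c * ((r : ℝ) + 1) / 2) :
    zstar ≤ (4 / 3) * z1 := by
  have hrf' : (r : ℝ) ≤ f := by exact_mod_cast hrf
  have hr0 : (0:ℝ) ≤ r := Nat.cast_nonneg r
  have hc0 : (0:ℝ) ≤ c := le_trans hr0 hc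
  have hF0 : (0:ℝ) ≤ (f:ℝ) + r := by linarith
  have h1 : c * ((f:ℝ) + r) ≤ T * ((f:ℝ) + r) := mul_le_mul_of_nonneg_right hT hF0
  have h2 : c * ((r:ℝ) + r) ≤ c * ((f:ℝ) + r) := by
    apply mul_le_mul_of_nonneg_left _ hc0; linarith
  have h3 : (0:ℝ) ≤ r * (r - 1) := by
    rcases Nat.eq_zero_or_pos r with h | h
    · simp [h]
    · have : (1:ℝ) ≤ r := by exact_mod_cast h
      nlinarith
  linarith
end

section
/- Let f and r be natural numbers with f < r, set F = f + r, and let T, c, z*, z₁ be real numbers satisfying c ≥ r, T ≥ c + 1, z* ≤ T·F − r(r−1)/2 − c, and z₁ ≥ T·F − (1/4)·(c·F + r·(r−f) + 2c). Then z* ≤ (4/3)·z₁. -/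
/-- arithmetic content of Case 2 (`f < r`) of the proposition
that `Quickest-to-ultimate` is a 4/3-approximation for incremental maximum
matching. Here `F = f + r`. -/
theorem matching_four_thirds_case_two
    (f r : ℕ) (hfr : f < r) (T c zstar z1 : ℝ)
    (hc : (r : ℝ) ≤ c) (hT : c + 1 ≤ T)
    (hzstar : zstar ≤ T * ((f : ℝ) + (r : ℝ)) - (r : ℝ) * ((r : ℝ) - 1) / 2 - c)
    (hz1 : z1 ≥ T * ((f : ℝ) + (r : ℝ))
      - (1 / 4) * (c * ((f : ℝ) + (r : ℝ)) + (r : ℝ) * ((r : ℝ) - (f : ℝ)) + 2 * c)) :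
    zstar ≤ (4 / 3) * z1 := by
  have hf0 : (0:ℝ) ≤ (f:ℝ) := Nat.cast_nonneg f
  have hr0 : (0:ℝ) ≤ (r:ℝ) := Nat.cast_nonneg r
  nlinarith [mul_nonneg (sub_nonneg.2 hT) (add_nonneg hf0 hr0),
    mul_nonneg hr0 hf0, mul_nonneg hr0 hr0, hc, hfr]
end

section
/- Let f and r be integers with 0 ≤ f < r, set ρ = ⌈(r−f)/2⌉, and let λ_0, …, λ_{r−1} be nonnegative real numbers such that λ_i = 1 for every 0 ≤ i ≤ ρ−1, λ_ρ ≤ λ_{ρ+1} ≤ ⋯ ≤ λ_{r−1}, and λ_0 + λ_1 + ⋯ + λ_{r−1} = c with c ≥ r. Then Σ_{i=0}^{r−1} λ_i·(r−i) ≤ (1/4)·(c·(f+r) + r·(r−f) + 2c). -/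
private lemma sum_range_id_real (n : ℕ) :
    (∑ i ∈ Finset.range n, (i : ℝ)) * 2 = (n : ℝ) * ((n : ℝ) - 1) := by
  induction n with
  | zero => simp
  | succ n ih =>
    rw [Finset.sum_range_succ, add_mul, ih]
    push_cast
    ring

/-- core of Case 2 (`f < r`) of the improved lower bound on the
value of `Quickest-to-ultimate` for incremental maximum matching.
Here `ρ = ⌈(r-f)/2⌉`, expressed as natural-number division `(r - f + 1) / 2`
(which equals the ceiling of `(r - f)/2` since `f < r`). -/
theorem weighted_sum_bound_case_two
    (f r : ℕ) (hfr : f < r) (c : ℝ) (lam : ℕ → ℝ)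
    (hnonneg : ∀ i, i < r → 0 ≤ lam i)
    (hone : ∀ i, i < (r - f + 1) / 2 → lam i = 1)
    (hmono : ∀ i, (r - f + 1) / 2 ≤ i → i + 1 < r → lam i ≤ lam (i + 1))
    (hsum : (∑ i ∈ Finset.range r, lam i) = c)
    (hc : (r : ℝ) ≤ c) :
    (∑ i ∈ Finset.range r, lam i * ((r : ℝ) - (i : ℝ)))
      ≤ (1 / 4) * (c * ((f : ℝ) + (r : ℝ)) + (r : ℝ) * ((r : ℝ) - (f : ℝ)) + 2 * c) := by
  set ρ : ℕ := (r - f + 1) / 2 with hρdef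
  have hρr : ρ ≤ r := by omega
  have hρ1 : 1 ≤ ρ := by omega
  -- monotonicity on [ρ, r)
  have hmono' : ∀ j i, ρ ≤ j → j ≤ i → i < r → lam j ≤ lam i := by
    intro j i hj hji hir
    induction i with
    | zero => omega
    | succ n ih =>
      rcases Nat.eq_or_lt_of_le hji with h | h
      · rw [h]
      · exact le_trans (ih (by omega) (by omega)) (hmono n (by omega) hir)
  -- split sums
  have hsplit : ∀ g : ℕ → ℝ, (∑ i ∈ Finset.range r, g i)
      = (∑ i ∈ Finset.range ρ, g i) + (∑ i ∈ Finset.Ico ρ r, g i) := by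
    intro g
    exact (Finset.sum_range_add_sum_Ico g hρr).symm
  -- sum of lam over range ρ is ρ
  have hlamρ : (∑ i ∈ Finset.range ρ, lam i) = (ρ : ℝ) := by
    rw [Finset.sum_congr rfl fun i hi => hone i (Finset.mem_range.mp hi)]
    simp
  have hIcosum : (∑ i ∈ Finset.Ico ρ r, lam i) = c - (ρ : ℝ) := by
    have := hsplit lam
    rw [hsum, hlamρ] at this
    linarith
  -- Chebyshev on Ico ρ r
  have hanti : AntivaryOn lam (fun i => (r : ℝ) - (i : ℝ)) ↑(Finset.Ico ρ r) := by
    intro i hi j hj hij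
    simp only [Finset.coe_Ico, Set.mem_Ico] at hi hj
    have hij' : (r : ℝ) - (i : ℝ) < (r : ℝ) - (j : ℝ) := hij
    have : j < i := by
      have : (j : ℝ) < (i : ℝ) := by linarith
      exact_mod_cast this
    exact hmono' j i hj.1 (le_of_lt this) hi.2
  have hcheb := hanti.card_mul_sum_le_sum_mul_sum
  -- compute the weight sums
  have hWrange : ∀ n : ℕ, (∑ i ∈ Finset.range n, ((r : ℝ) - (i : ℝ)))
      = (n : ℝ) * (r : ℝ) - (n : ℝ) * ((n : ℝ) - 1) / 2 := by
    intro n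
    rw [Finset.sum_sub_distrib, Finset.sum_const, Finset.card_range, nsmul_eq_mul]
    have := sum_range_id_real n
    push_cast
    linarith
  have hW : (∑ i ∈ Finset.Ico ρ r, ((r : ℝ) - (i : ℝ)))
      = ((r : ℝ) - (ρ : ℝ)) * ((r : ℝ) - (ρ : ℝ) + 1) / 2 := by
    have h1 := hsplit (fun i => (r : ℝ) - (i : ℝ))
    rw [hWrange r, hWrange ρ] at h1
    linarith [h1]
  have hcard : ((Finset.Ico ρ r).card : ℝ) = (r : ℝ) - (ρ : ℝ) := by
    rw [Nat.card_Ico]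
    push_cast [Nat.cast_sub hρr]
    ring
  rw [hcard, hIcosum, hW] at hcheb
  -- bound the tail sum T
  set T : ℝ := ∑ i ∈ Finset.Ico ρ r, lam i * ((r : ℝ) - (i : ℝ)) with hTdef
  have hT : T ≤ (c - (ρ : ℝ)) * ((r : ℝ) - (ρ : ℝ) + 1) / 2 := by
    rcases eq_or_lt_of_le hρr with h | h
    · have : T = 0 := by
        rw [hTdef, h, Finset.Ico_self, Finset.sum_empty]
      rw [this, h]
      nlinarith
    · have hpos : (0 : ℝ) < (r : ℝ) - (ρ : ℝ) := by
        have : (ρ : ℝ) < (r : ℝ) := by exact_mod_cast h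
        linarith
      nlinarith [hcheb]
  -- the head sum
  have hHead : (∑ i ∈ Finset.range ρ, lam i * ((r : ℝ) - (i : ℝ)))
      = (ρ : ℝ) * (r : ℝ) - (ρ : ℝ) * ((ρ : ℝ) - 1) / 2 := by
    rw [Finset.sum_congr rfl fun i hi => by
      rw [hone i (Finset.mem_range.mp hi), one_mul]]
    exact hWrange ρ
  rw [hsplit (fun i => lam i * ((r : ℝ) - (i : ℝ))), hHead]
  -- parity case split
  have hcases : 2 * ρ = r - f ∨ 2 * ρ = r - f + 1 := by omega
  have hfcast : ((r - f : ℕ) : ℝ) = (r : ℝ) - (f : ℝ) := by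
    push_cast [Nat.cast_sub (le_of_lt hfr)]
    ring
  rcases hcases with h | h
  · have h2 : 2 * (ρ : ℝ) = (r : ℝ) - (f : ℝ) := by
      rw [← hfcast]; exact_mod_cast congrArg (fun n : ℕ => (n : ℝ)) h
    nlinarith [hT]
  · have h2 : 2 * (ρ : ℝ) = (r : ℝ) - (f : ℝ) + 1 := by
      rw [← hfcast]
      have := congrArg (fun n : ℕ => (n : ℝ)) h
      push_cast at this
      linarith
    nlinarith [hT, hc]
end
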